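/- Let D be a commutative Noetherian ring, p a prime ideal of D with a ∉ p, and A = D[X,Y]/(XY - a). Then the quotient A/pA is isomorphic to (D/p)[X,Y]/(XY - ā) where ā is the image of a in D/p, and this ring is a domain. -/

import Mathlib

open MvPolynomial

/-- The commutative generalized Weyl algebra of rank 1: `A = D[X,Y]/(XY - a)`. -/
noncomputable abbrev GWA (D : Type*) [CommRing D] (a : D) : Type _ :=
  MvPolynomial (Fin 2) D ⧸ (Ideal.span {X 0 * X 1 - C a} : Ideal (MvPolynomial (Fin 2) D))

section Domain

set_option linter.unusedSectionVars false

variable {k : Type*} [CommRing k] [IsDomain k] (a : k)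

/-- evaluation map to Laurent polynomials -/
noncomputable def gwaPhi : MvPolynomial (Fin 2) k →ₐ[k] LaurentPolynomial k :=
  MvPolynomial.aeval ![LaurentPolynomial.T 1, LaurentPolynomial.C a * LaurentPolynomial.T (-1)]

lemma gwaPhi_f : gwaPhi a (X 0 * X 1 - MvPolynomial.C a) = 0 := by
  have : LaurentPolynomial.T (R := k) 1 * (LaurentPolynomial.C a * LaurentPolynomial.T (-1))
      = LaurentPolynomial.C a := by
    rw [mul_left_comm, ← LaurentPolynomial.T_add]
    norm_num
  simp [gwaPhi, this]

/-- normal form -/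
noncomputable def gwaNF (u v : Polynomial k) : MvPolynomial (Fin 2) k :=
  Polynomial.aeval (X 0) u + X 1 * Polynomial.aeval (X 1) v

lemma gwa_nf_exists (P : MvPolynomial (Fin 2) k) :
    ∃ u v : Polynomial k,
      Ideal.Quotient.mk (Ideal.span {X 0 * X 1 - MvPolynomial.C a}) P
        = Ideal.Quotient.mk _ (gwaNF u v) := by
  induction P using MvPolynomial.induction_on with
  | C r => exact ⟨Polynomial.C r, 0, by simp [gwaNF]⟩
  | add p q hp hq =>
    obtain ⟨u1, v1, h1⟩ := hp
    obtain ⟨u2, v2, h2⟩ := hq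
    refine ⟨u1 + u2, v1 + v2, ?_⟩
    have : gwaNF (u1 + u2) (v1 + v2) = gwaNF u1 v1 + gwaNF u2 v2 := by
      simp [gwaNF]; ring
    rw [RingHom.map_add, h1, h2, this, RingHom.map_add]
  | mul_X p i hp =>
    obtain ⟨u, v, h⟩ := hp
    have hmul : Ideal.Quotient.mk (Ideal.span {X 0 * X 1 - MvPolynomial.C a}) (p * X i)
        = Ideal.Quotient.mk _ (gwaNF u v * X i) := by
      rw [map_mul, h, ← map_mul]
    fin_cases i
    · refine ⟨Polynomial.X * u + Polynomial.C (a * v.coeff 0), Polynomial.C a * v.divX, ?_⟩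
      rw [hmul, Ideal.Quotient.eq, Ideal.mem_span_singleton]
      refine ⟨Polynomial.aeval (X 1) v, ?_⟩
      have hv := congrArg (Polynomial.aeval (X 1 : MvPolynomial (Fin 2) k))
        (Polynomial.divX_mul_X_add v)
      simp only [map_add, map_mul, Polynomial.aeval_X, Polynomial.aeval_C,
        MvPolynomial.algebraMap_eq] at hv
      simp only [gwaNF, map_add, map_mul, Polynomial.aeval_X, Polynomial.aeval_C,
        MvPolynomial.algebraMap_eq, map_mul, Fin.mk_zero, Fin.mk_one]
      rw [← hv]; ring
    · refine ⟨Polynomial.C a * u.divX, Polynomial.C (u.coeff 0) + Polynomial.X * v, ?_⟩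
      rw [hmul, Ideal.Quotient.eq, Ideal.mem_span_singleton]
      refine ⟨Polynomial.aeval (X 0) u.divX, ?_⟩
      have hu := congrArg (Polynomial.aeval (X 0 : MvPolynomial (Fin 2) k))
        (Polynomial.divX_mul_X_add u)
      simp only [map_add, map_mul, Polynomial.aeval_X, Polynomial.aeval_C,
        MvPolynomial.algebraMap_eq] at hu
      simp only [gwaNF, map_add, map_mul, Polynomial.aeval_X, Polynomial.aeval_C,
        MvPolynomial.algebraMap_eq, map_mul, Fin.mk_zero, Fin.mk_one]
      rw [← hu]; ring

lemma gwa_aeval_T_one (u : Polynomial k) :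
    Polynomial.aeval (LaurentPolynomial.T (R := k) 1) u = Polynomial.toLaurent u := by
  rw [← Polynomial.toLaurent_X, ← Polynomial.coe_toLaurentAlg,
    Polynomial.aeval_algHom_apply, Polynomial.aeval_X_left_apply]

lemma gwa_trunc_negpart (v : Polynomial k) :
    LaurentPolynomial.trunc ((LaurentPolynomial.C a * LaurentPolynomial.T (-1)) *
      Polynomial.aeval (LaurentPolynomial.C a * LaurentPolynomial.T (-1)) v) = 0 := by
  induction v using Polynomial.induction_on' with
  | add p q hp hq => rw [map_add, mul_add, map_add, hp, hq, add_zero]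
  | monomial n b =>
    have hx : ∀ m : ℕ, (LaurentPolynomial.C a * LaurentPolynomial.T (R := k) (-1)) ^ m
        = LaurentPolynomial.C (a ^ m) * LaurentPolynomial.T (-(m : ℤ)) := by
      intro m
      rw [mul_pow, ← map_pow, LaurentPolynomial.T_pow, mul_neg_one]
    have : (LaurentPolynomial.C a * LaurentPolynomial.T (R := k) (-1)) *
        Polynomial.aeval (LaurentPolynomial.C a * LaurentPolynomial.T (-1))
          (Polynomial.monomial n b)
        = LaurentPolynomial.C (b * a ^ (n + 1)) * LaurentPolynomial.T (-((n : ℤ) + 1)) := by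
      rw [Polynomial.aeval_monomial, mul_left_comm, ← pow_succ', hx (n + 1),
        ← LaurentPolynomial.C_eq_algebraMap, ← mul_assoc, ← map_mul]
      push_cast
      ring_nf
    rw [this, LaurentPolynomial.trunc_C_mul_T, if_neg (by omega)]

lemma gwa_aeval_C_mul_X_coeff (v : Polynomial k) (n : ℕ) :
    (Polynomial.aeval (Polynomial.C a * Polynomial.X) v).coeff n = a ^ n * v.coeff n := by
  induction v using Polynomial.induction_on' with
  | add p q hp hq => simp [hp, hq, mul_add]
  | monomial m b =>
    have : Polynomial.aeval (Polynomial.C a * Polynomial.X) (Polynomial.monomial m b)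
        = Polynomial.monomial m (b * a ^ m) := by
      rw [Polynomial.aeval_monomial, mul_pow, ← Polynomial.C_pow, Polynomial.algebraMap_eq,
        ← mul_assoc, ← Polynomial.C_mul, Polynomial.C_mul_X_pow_eq_monomial]
    rw [this, Polynomial.coeff_monomial, Polynomial.coeff_monomial]
    split_ifs with hmn
    · subst hmn; ring
    · rw [mul_zero]

theorem gwa_isDomain (ha : a ≠ 0) : IsDomain (GWA k a) := by
  set I : Ideal (MvPolynomial (Fin 2) k) := Ideal.span {X 0 * X 1 - MvPolynomial.C a} with hI
  have h0 : ∀ x ∈ I, (gwaPhi a).toRingHom x = 0 := by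
    intro x hx
    rw [hI, Ideal.mem_span_singleton] at hx
    obtain ⟨c, rfl⟩ := hx
    rw [map_mul]
    simp [gwaPhi_f]
  let ψ : GWA k a →+* LaurentPolynomial k := Ideal.Quotient.lift I (gwaPhi a).toRingHom h0
  have hψmk : ∀ P, ψ (Ideal.Quotient.mk I P) = gwaPhi a P := fun P => rfl
  have hψ : Function.Injective ψ := by
    rw [injective_iff_map_eq_zero]
    intro z hz
    obtain ⟨P, rfl⟩ := Ideal.Quotient.mk_surjective z
    obtain ⟨u, v, hP⟩ := gwa_nf_exists a P
    rw [hP] at hz ⊢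
    rw [hψmk] at hz
    have key : gwaPhi a (gwaNF u v) = Polynomial.toLaurent u +
        (LaurentPolynomial.C a * LaurentPolynomial.T (-1)) *
          Polynomial.aeval (LaurentPolynomial.C a * LaurentPolynomial.T (-1)) v := by
      have h1 : gwaPhi a (X 0) = LaurentPolynomial.T 1 := by simp [gwaPhi]
      have h2 : gwaPhi a (X 1) = LaurentPolynomial.C a * LaurentPolynomial.T (-1) := by
        simp [gwaPhi]
      rw [gwaNF, map_add, map_mul, ← Polynomial.aeval_algHom_apply,
        ← Polynomial.aeval_algHom_apply, h1, h2, gwa_aeval_T_one]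
    rw [key] at hz
    -- u = 0
    have hu : u = 0 := by
      have := congrArg LaurentPolynomial.trunc hz
      rw [map_add, Polynomial.trunc_toLaurent, gwa_trunc_negpart, add_zero, map_zero] at this
      exact this
    rw [hu, map_zero, zero_add] at hz
    have hCT : (LaurentPolynomial.C a * LaurentPolynomial.T (R := k) (-1)) ≠ 0 := by
      rw [← LaurentPolynomial.single_eq_C_mul_T]
      exact fun h => ha (AddMonoidAlgebra.single_eq_zero.mp h)
    have hv2 : Polynomial.aeval (LaurentPolynomial.C a * LaurentPolynomial.T (R := k) (-1)) v
        = 0 := by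
      rcases mul_eq_zero.mp hz with h | h
      · exact absurd h hCT
      · exact h
    have hv : v = 0 := by
      have h3 : Polynomial.aeval
          ((LaurentPolynomial.invert (R := k)).toAlgHom
            (LaurentPolynomial.C a * LaurentPolynomial.T (-1))) v = 0 := by
        rw [Polynomial.aeval_algHom_apply, hv2, map_zero]
      simp only [AlgEquiv.toAlgHom_eq_coe, AlgHom.coe_coe, AlgEquiv.coe_toAlgHom, map_mul, LaurentPolynomial.invert_C,
        LaurentPolynomial.invert_T, neg_neg] at h3
      have h4 : (LaurentPolynomial.C a * LaurentPolynomial.T (R := k) 1)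
          = Polynomial.toLaurentAlg (Polynomial.C a * Polynomial.X) := by
        rw [Polynomial.toLaurentAlg_apply, map_mul, Polynomial.toLaurent_C,
          Polynomial.toLaurent_X]
      rw [h4, Polynomial.aeval_algHom_apply, Polynomial.toLaurentAlg_apply,
        Polynomial.toLaurent_eq_zero] at h3
      ext n
      have := congrArg (fun w => Polynomial.coeff w n) h3
      simp only [Polynomial.coeff_zero] at this ⊢
      rw [gwa_aeval_C_mul_X_coeff] at this
      exact (mul_eq_zero.mp this).resolve_left (pow_ne_zero n ha)
    rw [hu, hv]
    simp [gwaNF]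
  haveI : Nontrivial (GWA k a) := by
    refine ⟨⟨1, 0, fun h => one_ne_zero (α := LaurentPolynomial k) ?_⟩⟩
    rw [← map_one ψ, h, map_zero]
  haveI : NoZeroDivisors (GWA k a) := by
    refine ⟨fun {x y} hxy => ?_⟩
    have : ψ x * ψ y = 0 := by rw [← map_mul, hxy, map_zero]
    rcases mul_eq_zero.mp this with h | h
    · exact Or.inl (hψ (by rw [h, map_zero]))
    · exact Or.inr (hψ (by rw [h, map_zero]))
  exact NoZeroDivisors.to_isDomain _

end Domain

set_option maxHeartbeats 1000000 in
/-- If `p` is a prime ideal of the commutative Noetherian ring `D` with `a ∉ p`, then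
`A/pA ≅ (D/p)[X,Y]/(XY - ā)` where `ā` is the image of `a` in `D/p`, and this ring
is a domain. -/
theorem gwa_quotient_map_iso (D : Type*) [CommRing D] [IsNoetherianRing D] (a : D)
    (p : Ideal D) (hp : p.IsPrime) (ha : a ∉ p) :
    Nonempty
      ((GWA D a ⧸ p.map (algebraMap D (GWA D a))) ≃+*
        GWA (D ⧸ p) (Ideal.Quotient.mk p a)) ∧
    IsDomain (GWA D a ⧸ p.map (algebraMap D (GWA D a))) := by
  haveI := hp
  set I : Ideal (MvPolynomial (Fin 2) D) := Ideal.span {X 0 * X 1 - C a} with hIdef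
  set J : Ideal (MvPolynomial (Fin 2) D) := p.map (C : D →+* MvPolynomial (Fin 2) D) with hJdef
  have halg : algebraMap D (GWA D a) = (Ideal.Quotient.mk I).comp (C : D →+* _) := rfl
  have hmap : p.map (algebraMap D (GWA D a)) = J.map (Ideal.Quotient.mk I) := by
    rw [halg, hJdef, Ideal.map_map]
  let e1 : (GWA D a ⧸ p.map (algebraMap D (GWA D a))) ≃+*
      (GWA D a ⧸ J.map (Ideal.Quotient.mk I)) := Ideal.quotEquivOfEq hmap
  let e2 := DoubleQuot.quotQuotEquivQuotSup I J
  let e3 : (MvPolynomial (Fin 2) D ⧸ (I ⊔ J)) ≃+* (MvPolynomial (Fin 2) D ⧸ (J ⊔ I)) :=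
    Ideal.quotEquivOfEq (by rw [sup_comm])
  let e4 := (DoubleQuot.quotQuotEquivQuotSup J I).symm
  let E' : (MvPolynomial (Fin 2) D ⧸ J) ≃+* MvPolynomial (Fin 2) (D ⧸ p) :=
    (MvPolynomial.quotientEquivQuotientMvPolynomial p).symm.toRingEquiv
  have key : (Ideal.span {X 0 * X 1 - C (Ideal.Quotient.mk p a)} :
      Ideal (MvPolynomial (Fin 2) (D ⧸ p))) = (I.map (Ideal.Quotient.mk J)).map (E' : _ →+* _) := by
    have hEf : E' (Ideal.Quotient.mk J (X 0 * X 1 - C a))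
        = X 0 * X 1 - C (Ideal.Quotient.mk p a) := by
      rw [show (E' : _ → _) = (MvPolynomial.quotientEquivQuotientMvPolynomial (σ := Fin 2) p).symm
        from rfl, AlgEquiv.symm_apply_eq]
      simp [MvPolynomial.quotientEquivQuotientMvPolynomial]
      rfl
    rw [hIdef, Ideal.map_span, Set.image_singleton, Ideal.map_span, Set.image_singleton]
    exact congrArg (fun y => Ideal.span {y}) hEf.symm
  let e5 := Ideal.quotientEquiv (I.map (Ideal.Quotient.mk J))
    (Ideal.span {X 0 * X 1 - C (Ideal.Quotient.mk p a)}) E' key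
  let E : (GWA D a ⧸ p.map (algebraMap D (GWA D a))) ≃+* GWA (D ⧸ p) (Ideal.Quotient.mk p a) :=
    e1.trans (e2.trans (e3.trans (e4.trans e5)))
  have hane : Ideal.Quotient.mk p a ≠ 0 := by
    simpa [Ne, Ideal.Quotient.eq_zero_iff_mem] using ha
  haveI := gwa_isDomain (Ideal.Quotient.mk p a) hane
  exact ⟨⟨E⟩, MulEquiv.isDomain _ E.toMulEquiv⟩
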